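/- Let a, b, σ be positive real numbers and let ε ∈ (0,1]. For every B with 0 < B < 1, B·log₂(1 + ε·a/((1−ε)·a + B·σ)) + (1−B)·log₂(1 + ε·b/((1−ε)·b + (1−B)·σ)) ≤ log₂(1 + ε·(a+b)/((1−ε)·(a+b) + σ)), and equality holds if and only if B = a/(a+b). (Theorem 3: with a = ρ_t|ĥ_t|², b = ρ_r|ĥ_r|², σ = σ_w², and ε the combined transceiver hardware quality factor, the achievable sum-rate of the OMA scheme never exceeds that of the NOMA scheme, with equality only at the time/frequency fraction B = a/(a+b).) -/

import Mathlib

open Real Set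

lemma logb_concave_aux {x y B : ℝ} (hx : 0 < x) (hy : 0 < y) (hB : 0 < B) (hB1 : B < 1) :
    B * Real.logb 2 x + (1 - B) * Real.logb 2 y ≤ Real.logb 2 (B * x + (1 - B) * y) := by
  have h := strictConcaveOn_log_Ioi.concaveOn.2 (mem_Ioi.2 hx) (mem_Ioi.2 hy)
    hB.le (by linarith : (0:ℝ) ≤ 1 - B) (by ring)
  simp only [smul_eq_mul] at h
  have h2 : (0:ℝ) < Real.log 2 := Real.log_pos one_lt_two
  simp only [Real.logb]
  have e1 : B * (Real.log x / Real.log 2) + (1 - B) * (Real.log y / Real.log 2)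
      = (B * Real.log x + (1 - B) * Real.log y) / Real.log 2 := by ring
  rw [e1]
  gcongr

lemma logb_strict_concave_aux {x y B : ℝ} (hx : 0 < x) (hy : 0 < y) (hB : 0 < B)
    (hB1 : B < 1) (hxy : x ≠ y) :
    B * Real.logb 2 x + (1 - B) * Real.logb 2 y < Real.logb 2 (B * x + (1 - B) * y) := by
  have h := strictConcaveOn_log_Ioi.2 (mem_Ioi.2 hx) (mem_Ioi.2 hy) hxy
    hB (by linarith : (0:ℝ) < 1 - B) (by ring)
  simp only [smul_eq_mul] at h
  have h2 : (0:ℝ) < Real.log 2 := Real.log_pos one_lt_two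
  simp only [Real.logb]
  have e1 : B * (Real.log x / Real.log 2) + (1 - B) * (Real.log y / Real.log 2)
      = (B * Real.log x + (1 - B) * Real.log y) / Real.log 2 := by ring
  rw [e1]
  gcongr

/-- Theorem 3: the OMA sum-rate never exceeds the NOMA sum-rate, with equality
iff the time/frequency fraction is `B = a/(a+b)`. -/
theorem oma_sum_rate_le_noma_sum_rate
    (a b σ ε : ℝ) (ha : 0 < a) (hb : 0 < b) (hσ : 0 < σ)
    (hε : 0 < ε) (hε1 : ε ≤ 1) :
    ∀ B : ℝ, 0 < B → B < 1 →
      (B * Real.logb 2 (1 + ε * a / ((1 - ε) * a + B * σ))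
          + (1 - B) * Real.logb 2 (1 + ε * b / ((1 - ε) * b + (1 - B) * σ))
        ≤ Real.logb 2 (1 + ε * (a + b) / ((1 - ε) * (a + b) + σ)))
      ∧
      ((B * Real.logb 2 (1 + ε * a / ((1 - ε) * a + B * σ))
          + (1 - B) * Real.logb 2 (1 + ε * b / ((1 - ε) * b + (1 - B) * σ))
        = Real.logb 2 (1 + ε * (a + b) / ((1 - ε) * (a + b) + σ)))
        ↔ B = a / (a + b)) := by
  intro B hB0 hB1
  have hε' : 0 ≤ 1 - ε := by linarith
  have hab : 0 < a + b := by linarith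
  have hD1 : 0 < (1 - ε) * a + B * σ := by nlinarith
  have hD2 : 0 < (1 - ε) * b + (1 - B) * σ := by nlinarith
  have hD : 0 < (1 - ε) * (a + b) + σ := by nlinarith
  set X : ℝ := 1 + ε * a / ((1 - ε) * a + B * σ) with hXdef
  set Y : ℝ := 1 + ε * b / ((1 - ε) * b + (1 - B) * σ) with hYdef
  set Z : ℝ := 1 + ε * (a + b) / ((1 - ε) * (a + b) + σ) with hZdef
  have hX : 0 < X := by rw [hXdef]; positivity
  have hY : 0 < Y := by rw [hYdef]; positivity
  have hZ : 0 < Z := by rw [hZdef]; positivity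
  -- step B: B*X + (1-B)*Y ≤ Z
  have hgap : Z - (B * X + (1 - B) * Y)
      = ε * (1 - ε) * σ * (a * (1 - B) - b * B) ^ 2
        / (((1 - ε) * (a + b) + σ) * (((1 - ε) * a + B * σ) * ((1 - ε) * b + (1 - B) * σ))) := by
    rw [hXdef, hYdef, hZdef]
    obtain ⟨D1, e1⟩ : ∃ D, D = (1 - ε) * a + B * σ := ⟨_, rfl⟩
    obtain ⟨D2, e2⟩ : ∃ D, D = (1 - ε) * b + (1 - B) * σ := ⟨_, rfl⟩
    obtain ⟨D3, e3⟩ : ∃ D, D = (1 - ε) * (a + b) + σ := ⟨_, rfl⟩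
    have h1 : D1 ≠ 0 := by rw [e1]; exact hD1.ne'
    have h2 : D2 ≠ 0 := by rw [e2]; exact hD2.ne'
    have h3 : D3 ≠ 0 := by rw [e3]; exact hD.ne'
    rw [← e1, ← e2, ← e3]
    field_simp
    rw [e1, e2, e3]
    ring
  have hgap0 : 0 ≤ Z - (B * X + (1 - B) * Y) := by
    rw [hgap]
    apply div_nonneg
    · have := sq_nonneg (a * (1 - B) - b * B)
      positivity
    · positivity
  have hkeyB : B * X + (1 - B) * Y ≤ Z := by linarith
  have hmix : 0 < B * X + (1 - B) * Y := by
    have : 0 < 1 - B := by linarith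
    positivity
  have hmain : B * Real.logb 2 X + (1 - B) * Real.logb 2 Y ≤ Real.logb 2 Z :=
    (logb_concave_aux hX hY hB0 hB1).trans
      (Real.logb_le_logb_of_le one_lt_two hmix hkeyB)
  refine ⟨hmain, ?_, ?_⟩
  · -- equality → B = a/(a+b)
    intro heq
    by_contra hne
    have hXY : X ≠ Y := by
      intro h
      apply hne
      rw [hXdef, hYdef] at h
      have h' : ε * a / ((1 - ε) * a + B * σ) = ε * b / ((1 - ε) * b + (1 - B) * σ) := by
        linarith
      rw [div_eq_div_iff hD1.ne' hD2.ne'] at h'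
      have h'' : ε * σ * (a * (1 - B)) = ε * σ * (b * B) := by linear_combination h'
      have h3 : a * (1 - B) = b * B :=
        mul_left_cancel₀ (by positivity) h''
      rw [eq_div_iff hab.ne']
      linarith
    have hstrict := logb_strict_concave_aux hX hY hB0 hB1 hXY
    have := Real.logb_le_logb_of_le one_lt_two hmix hkeyB
    linarith
  · -- B = a/(a+b) → equality
    intro hBa
    have hXZ : X = Z := by
      rw [hXdef, hZdef, hBa]
      congr 1
      have hd : 0 < (1 - ε) * a + a / (a + b) * σ := by
        have : 0 < a / (a + b) := div_pos ha hab
        nlinarith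
      rw [div_eq_div_iff hd.ne' hD.ne']
      field_simp
    have hYZ : Y = Z := by
      rw [hYdef, hZdef, hBa]
      congr 1
      have hB' : 1 - a / (a + b) = b / (a + b) := by
        field_simp
        ring
      rw [hB']
      have hd : 0 < (1 - ε) * b + b / (a + b) * σ := by
        have : 0 < b / (a + b) := div_pos hb hab
        nlinarith
      rw [div_eq_div_iff hd.ne' hD.ne']
      field_simp
    rw [hXZ, hYZ]
    ring
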